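/- Let J be a metric tree with metric ρ and let 0 < λ < 1. Then the kernel K(a,b) = λ^{ρ(a,b)} on Vert(J) × Vert(J) is positive definite; consequently there exists a real Hilbert space containing vectors e_a, a ∈ Vert(J), with ⟨e_a, e_b⟩ = λ^{ρ(a,b)}. -/

import Mathlib

open scoped RealInnerProductSpace

namespace KernelPDAux

attribute [local instance] Classical.decEq

open SimpleGraph

variable {V : Type} {G : SimpleGraph V}

noncomputable def pth (hG : G.IsTree) (a b : V) : G.Walk a b :=
  (hG.existsUnique_path a b).exists.choose

lemma pth_isPath (hG : G.IsTree) (a b : V) : (pth hG a b).IsPath :=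
  (hG.existsUnique_path a b).exists.choose_spec

lemma pth_unique (hG : G.IsTree) {a b : V} (p : G.Walk a b) (hp : p.IsPath) :
    p = pth hG a b := by
  obtain ⟨q, _, hq2⟩ := hG.existsUnique_path a b
  rw [hq2 p hp, hq2 _ (pth_isPath hG a b)]

lemma pth_self (hG : G.IsTree) (a : V) : pth hG a a = Walk.nil :=
  (pth_unique hG Walk.nil Walk.IsPath.nil).symm

noncomputable def nxt (hG : G.IsTree) (r a : V) : V := (pth hG a r).getVert 1

lemma adj_nxt (hG : G.IsTree) (r : V) {a : V} (ha : a ≠ r) : G.Adj a (nxt hG r a) :=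
  Walk.adj_snd (Walk.not_nil_of_ne ha)

lemma pth_tail (hG : G.IsTree) (r : V) {a : V} (ha : a ≠ r) :
    (pth hG a r).tail = pth hG (nxt hG r a) r :=
  pth_unique hG _ ((pth_isPath hG a r).tail)

lemma length_nxt (hG : G.IsTree) (r : V) {a : V} (ha : a ≠ r) :
    (pth hG (nxt hG r a) r).length + 1 = (pth hG a r).length := by
  rw [← pth_tail hG r ha]
  exact Walk.length_tail_add_one (Walk.not_nil_of_ne ha)

lemma edges_pth (hG : G.IsTree) (r : V) {a : V} (ha : a ≠ r) :
    (pth hG a r).edges = s(a, nxt hG r a) :: (pth hG (nxt hG r a) r).edges := by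
  conv_lhs => rw [← Walk.cons_tail_eq (pth hG a r) (Walk.not_nil_of_ne ha)]
  rw [Walk.edges_cons, pth_tail hG r ha]
  rfl

lemma not_mem_tail_edges (hG : G.IsTree) (r : V) {a : V} (ha : a ≠ r) :
    s(a, nxt hG r a) ∉ (pth hG (nxt hG r a) r).edges := by
  have h := (pth_isPath hG a r).isTrail.edges_nodup
  rw [edges_pth hG r ha] at h
  exact (List.nodup_cons.mp h).1


noncomputable def ee (hG : G.IsTree) (ℓ : Sym2 V → ℝ) (lam : ℝ) (r : V) :
    ℕ → V → lp (fun _ : Option (Sym2 V) => ℝ) 2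
  | 0, _ => lp.single 2 none 1
  | (n+1), a =>
    if a = r then lp.single 2 none 1
    else
      (lam ^ ℓ s(a, nxt hG r a)) • ee hG ℓ lam r n (nxt hG r a) +
        Real.sqrt (1 - (lam ^ ℓ s(a, nxt hG r a)) ^ 2) •
          lp.single 2 (some s(a, nxt hG r a)) 1

noncomputable def eV (hG : G.IsTree) (ℓ : Sym2 V → ℝ) (lam : ℝ) (r : V) (a : V) :
    lp (fun _ : Option (Sym2 V) => ℝ) 2 :=
  ee hG ℓ lam r ((pth hG a r).length + 1) a

lemma ee_succ (hG : G.IsTree) (ℓ : Sym2 V → ℝ) (lam : ℝ) (r : V) (n : ℕ) (a : V) :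
    ee hG ℓ lam r (n+1) a =
      if a = r then lp.single 2 none 1
      else
        (lam ^ ℓ s(a, nxt hG r a)) • ee hG ℓ lam r n (nxt hG r a) +
          Real.sqrt (1 - (lam ^ ℓ s(a, nxt hG r a)) ^ 2) •
            lp.single 2 (some s(a, nxt hG r a)) 1 := rfl

lemma eV_r (hG : G.IsTree) (ℓ : Sym2 V → ℝ) (lam : ℝ) (r : V) :
    eV hG ℓ lam r r = lp.single 2 none 1 := by
  unfold eV
  rw [pth_self hG r]
  rw [show (Walk.nil : G.Walk r r).length + 1 = 0 + 1 from rfl, ee_succ, if_pos rfl]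

lemma eV_step (hG : G.IsTree) (ℓ : Sym2 V → ℝ) (lam : ℝ) (r : V) {a : V} (ha : a ≠ r) :
    eV hG ℓ lam r a =
      (lam ^ ℓ s(a, nxt hG r a)) • eV hG ℓ lam r (nxt hG r a) +
        Real.sqrt (1 - (lam ^ ℓ s(a, nxt hG r a)) ^ 2) •
          lp.single 2 (some s(a, nxt hG r a)) 1 := by
  have h1 := length_nxt hG r ha
  unfold eV
  rw [← h1, ee_succ, if_neg ha]

lemma eV_apply (hG : G.IsTree) (ℓ : Sym2 V → ℝ) (lam : ℝ) (r : V) :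
    ∀ (n : ℕ) (a : V) (f : Sym2 V), (pth hG a r).length ≤ n →
      f ∉ (pth hG a r).edges → (eV hG ℓ lam r a) (some f) = 0 := by
  intro n
  induction n with
  | zero =>
    intro a f hn hf
    have ha : a = r := Walk.eq_of_length_eq_zero (Nat.le_zero.mp hn)
    subst ha
    rw [eV_r]
    exact lp.single_apply_ne 2 none 1 (by simp)
  | succ n IH =>
    intro a f hn hf
    by_cases ha : a = r
    · subst ha
      rw [eV_r]
      exact lp.single_apply_ne 2 none 1 (by simp)
    · rw [eV_step hG ℓ lam r ha]
      rw [edges_pth hG r ha, List.mem_cons, not_or] at hf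
      have hlen : (pth hG (nxt hG r a) r).length ≤ n := by
        have := length_nxt hG r ha
        omega
      simp only [lp.coeFn_add, lp.coeFn_smul, Pi.add_apply, Pi.smul_apply, smul_eq_mul]
      rw [IH (nxt hG r a) f hlen hf.2,
        lp.single_apply_ne 2 _ 1 (by simpa using hf.1), mul_zero, mul_zero, add_zero]

lemma eV_apply' (hG : G.IsTree) (ℓ : Sym2 V → ℝ) (lam : ℝ) (r : V) (a : V) (f : Sym2 V)
    (hf : f ∉ (pth hG a r).edges) : (eV hG ℓ lam r a) (some f) = 0 :=
  eV_apply hG ℓ lam r _ a f le_rfl hf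

lemma inner_eV_single (hG : G.IsTree) (ℓ : Sym2 V → ℝ) (lam : ℝ) (r : V) (a : V) (f : Sym2 V)
    (hf : f ∉ (pth hG a r).edges) :
    ⟪eV hG ℓ lam r a, lp.single 2 (some f) (1:ℝ)⟫ = 0 := by
  classical
  rw [lp.inner_single_right]
  simp [RCLike.inner_apply, eV_apply' hG ℓ lam r a f hf]

lemma inner_single_single (i : Option (Sym2 V)) :
    ⟪(lp.single 2 i (1:ℝ) : lp (fun _ : Option (Sym2 V) => ℝ) 2), lp.single 2 i 1⟫ = 1 := by
  classical
  rw [lp.inner_single_left, lp.single_apply_self]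
  simp [RCLike.inner_apply]

end KernelPDAux

open KernelPDAux SimpleGraph in
theorem kernel_positive_definite {V : Type} [Countable V]
    (G : SimpleGraph V) (hG : G.IsTree)
    (ℓ : Sym2 V → ℝ) (hℓ : ∀ e ∈ G.edgeSet, 0 < ℓ e)
    (ρ : V → V → ℝ)
    (hρ : ∀ (a b : V) (p : G.Walk a b), p.IsPath → ρ a b = (p.edges.map ℓ).sum)
    (lam : ℝ) (hl0 : 0 < lam) (hl1 : lam < 1) :
    (∀ (s : Finset V) (c : V → ℝ),
      0 ≤ ∑ i ∈ s, ∑ j ∈ s, c i * c j * lam ^ ρ i j) ∧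
    ∃ (H : Type) (_ : NormedAddCommGroup H) (_ : InnerProductSpace ℝ H)
      (_ : CompleteSpace H) (e : V → H),
      ∀ a b : V, ⟪e a, e b⟫ = lam ^ ρ a b := by
  classical
  have hne : Nonempty V := hG.isConnected.nonempty
  obtain ⟨r⟩ := hne
  -- basic facts about ρ
  have ρ_eq : ∀ a b, ρ a b = ((pth hG a b).edges.map ℓ).sum :=
    fun a b => hρ a b _ (pth_isPath hG a b)
  have ρ_self : ∀ a, ρ a a = 0 := by
    intro a
    rw [ρ_eq a a, pth_self hG a]
    simp
  have ρ_symm : ∀ a b, ρ a b = ρ b a := by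
    intro a b
    rw [ρ_eq a b, hρ b a (pth hG a b).reverse (pth_isPath hG a b).reverse,
      Walk.edges_reverse, List.map_reverse, List.sum_reverse]
  -- facts about the weights
  have hμpos : ∀ a : V, a ≠ r → 0 < lam ^ ℓ s(a, nxt hG r a) :=
    fun a _ => Real.rpow_pos_of_pos hl0 _
  have hμle : ∀ a : V, a ≠ r → lam ^ ℓ s(a, nxt hG r a) ≤ 1 := by
    intro a ha
    exact Real.rpow_le_one hl0.le hl1.le (hℓ _ (adj_nxt hG r ha)).le
  -- edges of any path are inside the union of the two root paths
  have edges_sub : ∀ a b : V, ∀ f ∈ (pth hG a b).edges,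
      f ∈ (pth hG a r).edges ∨ f ∈ (pth hG b r).edges := by
    intro a b f hf
    have hb : ((pth hG a r).append (pth hG b r).reverse).bypass = pth hG a b :=
      pth_unique hG _ (Walk.bypass_isPath _)
    rw [← hb] at hf
    have h2 := Walk.edges_bypass_subset _ hf
    rw [Walk.edges_append, Walk.edges_reverse] at h2
    simpa using List.mem_append.mp h2
  -- the key step on ρ
  have step_ρ : ∀ a b : V, b ≠ r → s(b, nxt hG r b) ∉ (pth hG a r).edges →
      ρ a b = ℓ s(b, nxt hG r b) + ρ a (nxt hG r b) := by
    intro a b hb hfb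
    have hadj : G.Adj b (nxt hG r b) := adj_nxt hG r hb
    have hnotmem : s(b, nxt hG r b) ∉ (pth hG a (nxt hG r b)).edges := by
      intro hmem
      rcases edges_sub a (nxt hG r b) _ hmem with h | h
      · exact hfb h
      · exact not_mem_tail_edges hG r hb h
    have hbsupp : b ∉ (pth hG a (nxt hG r b)).support := by
      intro hsupp
      have hdrop : (pth hG a (nxt hG r b)).dropUntil b hsupp = pth hG b (nxt hG r b) :=
        pth_unique hG _ ((pth_isPath hG a (nxt hG r b)).dropUntil hsupp)
      have hsingle : (Walk.cons hadj Walk.nil : G.Walk b (nxt hG r b)) =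
          pth hG b (nxt hG r b) :=
        pth_unique hG _ (by simp [Walk.cons_isPath_iff, hadj.ne])
      have hmem2 : s(b, nxt hG r b) ∈ ((pth hG a (nxt hG r b)).dropUntil b hsupp).edges := by
        rw [hdrop, ← hsingle]
        simp
      exact hnotmem (Walk.edges_dropUntil_subset _ hsupp hmem2)
    have hconcat : ((pth hG a (nxt hG r b)).concat hadj.symm).IsPath := by
      rw [← Walk.isPath_reverse_iff, Walk.reverse_concat]
      exact ((pth_isPath hG a (nxt hG r b)).reverse).cons (by simpa using hbsupp)
    have h5 : ρ a b = (((pth hG a (nxt hG r b)).concat hadj.symm).edges.map ℓ).sum :=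
      hρ a b _ hconcat
    rw [h5, Walk.edges_concat, List.concat_eq_append, List.map_append, List.sum_append,
      ← ρ_eq, Sym2.eq_swap]
    simp [add_comm]
  -- prefix facts
  have sub_len : ∀ a b : V, s(b, nxt hG r b) ∈ (pth hG a r).edges →
      ∃ h : b ∈ (pth hG a r).support, pth hG b r = (pth hG a r).dropUntil b h := by
    intro a b hm
    have hsupp : b ∈ (pth hG a r).support := Walk.fst_mem_support_of_mem_edges _ hm
    exact ⟨hsupp, (pth_unique hG _ ((pth_isPath hG a r).dropUntil hsupp)).symm⟩
  have not_both : ∀ a b : V, a ≠ b → s(b, nxt hG r b) ∈ (pth hG a r).edges →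
      s(a, nxt hG r a) ∉ (pth hG b r).edges := by
    intro a b hab hb ha
    obtain ⟨h1, e1⟩ := sub_len a b hb
    obtain ⟨h2, e2⟩ := sub_len b a ha
    have hts := Walk.take_spec (pth hG a r) h1
    have l1 : (pth hG b r).length ≤ (pth hG a r).length := by
      rw [e1]; exact Walk.length_dropUntil_le _ h1
    have l2 : (pth hG a r).length ≤ (pth hG b r).length := by
      rw [e2]; exact Walk.length_dropUntil_le _ h2
    have hlen0 : ((pth hG a r).takeUntil b h1).length = 0 := by
      have hc := congrArg Walk.length hts
      rw [Walk.length_append, ← e1] at hc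
      omega
    exact hab (Walk.eq_of_length_eq_zero hlen0)
  -- the expansion workhorse
  have expand : ∀ x y : V, y ≠ r → s(y, nxt hG r y) ∉ (pth hG x r).edges →
      ⟪eV hG ℓ lam r x, eV hG ℓ lam r (nxt hG r y)⟫ = lam ^ ρ x (nxt hG r y) →
      ⟪eV hG ℓ lam r x, eV hG ℓ lam r y⟫ = lam ^ ρ x y := by
    intro x y hy hfy hIH
    rw [eV_step hG ℓ lam r hy]
    rw [inner_add_right, real_inner_smul_right, real_inner_smul_right, hIH,
      inner_eV_single hG ℓ lam r x _ hfy, mul_zero, add_zero,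
      step_ρ x y hy hfy, Real.rpow_add hl0]
  -- main claim
  have main : ∀ (n : ℕ) (a b : V), (pth hG a r).length + (pth hG b r).length ≤ n →
      ⟪eV hG ℓ lam r a, eV hG ℓ lam r b⟫ = lam ^ ρ a b := by
    intro n
    induction n using Nat.strong_induction_on with
    | _ n IH =>
    intro a b hn
    by_cases hab : a = b
    · subst hab
      by_cases ha : a = r
      · subst ha
        rw [eV_r, inner_single_single, ρ_self, Real.rpow_zero]
      · have hlen := length_nxt hG r ha
        have h4 : ⟪eV hG ℓ lam r (nxt hG r a), eV hG ℓ lam r (nxt hG r a)⟫ =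
            lam ^ ρ (nxt hG r a) (nxt hG r a) := by
          refine IH ((pth hG (nxt hG r a) r).length + (pth hG (nxt hG r a) r).length)
            (by omega) _ _ le_rfl
        rw [eV_step hG ℓ lam r ha]
        have h1 : ⟪eV hG ℓ lam r (nxt hG r a),
            (lp.single 2 (some s(a, nxt hG r a)) 1 : lp (fun _ : Option (Sym2 V) => ℝ) 2)⟫
            = 0 :=
          inner_eV_single hG ℓ lam r _ _ (not_mem_tail_edges hG r ha)
        have h2 : ⟪(lp.single 2 (some s(a, nxt hG r a)) 1 : lp (fun _ : Option (Sym2 V) => ℝ) 2),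
            eV hG ℓ lam r (nxt hG r a)⟫ = 0 := by
          rw [real_inner_comm]; exact h1
        have h3 := inner_single_single (V := V) (some s(a, nxt hG r a))
        simp only [inner_add_left, inner_add_right, real_inner_smul_left,
          real_inner_smul_right, h1, h2, h3, h4, ρ_self, Real.rpow_zero]
        have hsq : Real.sqrt (1 - (lam ^ ℓ s(a, nxt hG r a)) ^ 2) ^ 2 =
            1 - (lam ^ ℓ s(a, nxt hG r a)) ^ 2 := by
          apply Real.sq_sqrt
          nlinarith [hμpos a ha, hμle a ha]
        nlinarith [hsq]
    · by_cases hbr : b = r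
      · have har : a ≠ r := fun h => hab (h.trans hbr.symm)
        rw [real_inner_comm, ρ_symm]
        refine expand b a har ?_ ?_
        · rw [hbr, pth_self hG r]; simp
        · have hlen := length_nxt hG r har
          refine IH ((pth hG b r).length + (pth hG (nxt hG r a) r).length) ?_ b
            (nxt hG r a) le_rfl
          have : (pth hG b r).length = 0 := by rw [hbr, pth_self hG r]; rfl
          omega
      · by_cases hfb : s(b, nxt hG r b) ∈ (pth hG a r).edges
        · -- expand on the a side
          have har : a ≠ r := by
            intro h
            rw [h, pth_self hG r] at hfb
            simp at hfb
          have hfa : s(a, nxt hG r a) ∉ (pth hG b r).edges := not_both a b hab hfb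
          rw [real_inner_comm, ρ_symm]
          refine expand b a har hfa ?_
          have hlen := length_nxt hG r har
          have h := IH ((pth hG b r).length + (pth hG (nxt hG r a) r).length)
            (by omega) b (nxt hG r a) le_rfl
          exact h
        · -- expand on the b side
          refine expand a b hbr hfb ?_
          have hlen := length_nxt hG r hbr
          refine IH ((pth hG a r).length + (pth hG (nxt hG r b) r).length)
            (by omega) a (nxt hG r b) le_rfl
  have he : ∀ a b : V, ⟪eV hG ℓ lam r a, eV hG ℓ lam r b⟫ = lam ^ ρ a b :=
    fun a b => main _ a b le_rfl
  constructor
  · intro s c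
    have hexp : ⟪∑ i ∈ s, c i • eV hG ℓ lam r i, ∑ j ∈ s, c j • eV hG ℓ lam r j⟫ =
        ∑ i ∈ s, ∑ j ∈ s, c i * c j * lam ^ ρ i j := by
      rw [sum_inner]
      refine Finset.sum_congr rfl fun i _ => ?_
      rw [inner_sum]
      refine Finset.sum_congr rfl fun j _ => ?_
      rw [real_inner_smul_left, real_inner_smul_right, he i j]
      ring
    exact hexp ▸ real_inner_self_nonneg
  · exact ⟨lp (fun _ : Option (Sym2 V) => ℝ) 2, inferInstance, inferInstance, inferInstance,
      eV hG ℓ lam r, he⟩
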